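/- Let $\epsilon>0$, $\bar c>0$, $\bar v>0$ with $\epsilon\bar c<1$, $\epsilon\bar v<1$, and assume the stability condition $\bar v/\bar c > \sqrt{2}/\sqrt{1+\epsilon^2\bar c^2}$. Then $E_3:=2\bar c^2\bar v^2-\epsilon^2\bar c^2\bar v^4-\bar v^4<0$, and consequently the two roots $z^2 = \frac{-E_2\pm\sqrt{E_2^2-4E_1E_3}}{2E_1}$ of $E_1 z^4+E_2 z^2+E_3=0$ (with $E_1,E_2$ as above) are real, positive, and distinct. -/

import Mathlib

lemma quad_root_aux (A B C s : ℝ) (hA : A ≠ 0) (hs : s ^ 2 = B ^ 2 - 4 * A * C) :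
    A * ((-B + s) / (2 * A)) ^ 2 + B * ((-B + s) / (2 * A)) + C = 0 := by
  field_simp
  linear_combination hs

/-- Under the stability condition, `E₃ < 0`, and the two roots
`z² = (-E₂ ± √(E₂²-4E₁E₃))/(2E₁)` of `E₁z⁴+E₂z²+E₃ = 0` are real, positive
and distinct. -/
theorem stmt7 (ε c v : ℝ) (hε : 0 < ε) (hc : 0 < c) (hv : 0 < v)
    (hεc : ε * c < 1) (hεv : ε * v < 1)
    (hstab : v / c > Real.sqrt 2 / Real.sqrt (1 + ε ^ 2 * c ^ 2)) :
    let E₁ : ℝ := 2 * ε ^ 4 * c ^ 2 * v ^ 2 - ε ^ 2 * c ^ 2 - 1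
    let E₂ : ℝ := 2 * ε ^ 4 * c ^ 2 * v ^ 4 - 6 * ε ^ 2 * c ^ 2 * v ^ 2 + 2 * v ^ 2 + 2 * c ^ 2
    let E₃ : ℝ := 2 * c ^ 2 * v ^ 2 - ε ^ 2 * c ^ 2 * v ^ 4 - v ^ 4
    let r₁ : ℝ := (-E₂ + Real.sqrt (E₂ ^ 2 - 4 * E₁ * E₃)) / (2 * E₁)
    let r₂ : ℝ := (-E₂ - Real.sqrt (E₂ ^ 2 - 4 * E₁ * E₃)) / (2 * E₁)
    E₃ < 0 ∧ 0 < r₁ ∧ 0 < r₂ ∧ r₁ ≠ r₂ ∧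
      E₁ * r₁ ^ 2 + E₂ * r₁ + E₃ = 0 ∧ E₁ * r₂ ^ 2 + E₂ * r₂ + E₃ = 0 := by
  intro E₁ E₂ E₃ r₁ r₂
  have h1 : (0:ℝ) < 1 + ε ^ 2 * c ^ 2 := by positivity
  -- squared stability condition
  have hS : 2 * c ^ 2 < v ^ 2 * (1 + ε ^ 2 * c ^ 2) := by
    have h2 : Real.sqrt 2 / Real.sqrt (1 + ε ^ 2 * c ^ 2) * c < v := by
      rw [gt_iff_lt, lt_div_iff₀ hc] at hstab
      linarith
    have h3 : Real.sqrt 2 * c < v * Real.sqrt (1 + ε ^ 2 * c ^ 2) := by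
      rw [div_mul_eq_mul_div, div_lt_iff₀ (Real.sqrt_pos.mpr h1)] at h2
      linarith
    have h4 : (Real.sqrt 2 * c) ^ 2 < (v * Real.sqrt (1 + ε ^ 2 * c ^ 2)) ^ 2 := by
      apply sq_lt_sq' _ h3
      nlinarith [Real.sqrt_nonneg 2, Real.sqrt_nonneg (1 + ε ^ 2 * c ^ 2), h3, hc.le, hv.le]
    have h5 : Real.sqrt 2 ^ 2 = 2 := Real.sq_sqrt (by norm_num)
    have h6 : Real.sqrt (1 + ε ^ 2 * c ^ 2) ^ 2 = 1 + ε ^ 2 * c ^ 2 := Real.sq_sqrt h1.le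
    nlinarith [h4]
  have hεv0 : 0 < ε * v := mul_pos hε hv
  have hεc0 : 0 < ε * c := mul_pos hε hc
  have hεv2 : ε ^ 2 * v ^ 2 < 1 := by nlinarith [hεv0, hεv]
  have hεc2 : ε ^ 2 * c ^ 2 < 1 := by nlinarith [hεc0, hεc]
  have hE3 : E₃ < 0 := by
    show (2 * c ^ 2 * v ^ 2 - ε ^ 2 * c ^ 2 * v ^ 4 - v ^ 4) < 0
    nlinarith [mul_pos hv hv, hS]
  have hE1 : E₁ < 0 := by
    show (2 * ε ^ 4 * c ^ 2 * v ^ 2 - ε ^ 2 * c ^ 2 - 1) < 0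
    nlinarith [mul_pos (mul_pos hε hε) (mul_pos hc hc), hεv2, hεc2]
  have hE2 : 0 < E₂ := by
    show (0:ℝ) < 2 * ε ^ 4 * c ^ 2 * v ^ 4 - 6 * ε ^ 2 * c ^ 2 * v ^ 2 + 2 * v ^ 2 + 2 * c ^ 2
    nlinarith [mul_pos (mul_pos hv hv) (sub_pos.mpr hεc2),
      mul_nonneg (sq_nonneg (1 - ε ^ 2 * v ^ 2)) (sq_nonneg c)]
  have hD : 0 < E₂ ^ 2 - 4 * E₁ * E₃ := by
    have key : E₂ ^ 2 - 4 * E₁ * E₃ =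
        4 * c ^ 2 * (1 - ε ^ 2 * v ^ 2) ^ 2 *
          (c ^ 2 * (1 - ε ^ 2 * v ^ 2) ^ 2 + 4 * v ^ 2) := by
      show (2 * ε ^ 4 * c ^ 2 * v ^ 4 - 6 * ε ^ 2 * c ^ 2 * v ^ 2 + 2 * v ^ 2 + 2 * c ^ 2) ^ 2
          - 4 * (2 * ε ^ 4 * c ^ 2 * v ^ 2 - ε ^ 2 * c ^ 2 - 1) *
            (2 * c ^ 2 * v ^ 2 - ε ^ 2 * c ^ 2 * v ^ 4 - v ^ 4) = _
      ring
    rw [key]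
    have hp : 0 < 1 - ε ^ 2 * v ^ 2 := by linarith
    have hp2 : 0 < (1 - ε ^ 2 * v ^ 2) ^ 2 := pow_pos hp 2
    exact mul_pos (mul_pos (by positivity) hp2) (by positivity)
  have hsq : Real.sqrt (E₂ ^ 2 - 4 * E₁ * E₃) ^ 2 = E₂ ^ 2 - 4 * E₁ * E₃ :=
    Real.sq_sqrt hD.le
  have hsqpos : 0 < Real.sqrt (E₂ ^ 2 - 4 * E₁ * E₃) := Real.sqrt_pos.mpr hD
  have hlt : Real.sqrt (E₂ ^ 2 - 4 * E₁ * E₃) < E₂ := by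
    have h4 : 0 < 4 * E₁ * E₃ := mul_pos_of_neg_of_neg (by linarith) hE3
    nlinarith [hsqpos, hE2]
  have h2E1 : 2 * E₁ < 0 := by linarith
  have hne : (2 : ℝ) * E₁ ≠ 0 := ne_of_lt h2E1
  refine ⟨hE3, ?_, ?_, ?_, ?_, ?_⟩
  · exact div_pos_of_neg_of_neg (by linarith) h2E1
  · exact div_pos_of_neg_of_neg (by nlinarith) h2E1
  · intro h
    have h2 : (-E₂ + Real.sqrt (E₂ ^ 2 - 4 * E₁ * E₃)) / (2 * E₁)
        = (-E₂ - Real.sqrt (E₂ ^ 2 - 4 * E₁ * E₃)) / (2 * E₁) := h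
    rw [div_eq_div_iff hne hne] at h2
    have h3 : -E₂ + Real.sqrt (E₂ ^ 2 - 4 * E₁ * E₃)
        = -E₂ - Real.sqrt (E₂ ^ 2 - 4 * E₁ * E₃) :=
      mul_right_cancel₀ hne h2
    linarith [hsqpos]
  · exact quad_root_aux E₁ E₂ E₃ _ (ne_of_lt hE1) hsq
  · have := quad_root_aux E₁ E₂ E₃ (-Real.sqrt (E₂ ^ 2 - 4 * E₁ * E₃)) (ne_of_lt hE1)
      (by rw [neg_pow]; simpa using hsq)
    have heq : -E₂ + -Real.sqrt (E₂ ^ 2 - 4 * E₁ * E₃)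
        = -E₂ - Real.sqrt (E₂ ^ 2 - 4 * E₁ * E₃) := by ring
    rw [heq] at this
    exact this
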